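/- Consider the single-integrator network Mẋ = −Lx + Fu, y = Hx, with M positive diagonal and L a connected undirected graph Laplacian, and its clustered reduction M̂ż = −L̂z + F̂u, ŷ = Ĥz with M̂ = ΠᵀMΠ, L̂ = ΠᵀLΠ, F̂ = ΠᵀF, Ĥ = HΠ for any partition characteristic matrix Π. Then the impulse responses satisfy lim_{t→∞} y(t) = lim_{t→∞} ŷ(t) = H𝟙_n𝟙_nᵀF / (𝟙_nᵀM𝟙_n). -/

import Mathlib

open Matrix Filter NormedSpace


lemma UDU_apply {N : ℕ} (U : Matrix (Fin N) (Fin N) ℝ) (d : Fin N → ℝ) (i j : Fin N) :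
    (U * diagonal d * star U) i j = ∑ k, U i k * d k * U j k := by
  simp [mul_apply, diagonal, star_apply, Finset.sum_ite_eq, mul_comm]

lemma exp_diag_real {N : ℕ} (w : Fin N → ℝ) :
    exp (diagonal w) = diagonal (fun k => Real.exp (w k)) := by
  rw [Matrix.exp_diagonal]
  have : exp w = fun k => Real.exp (w k) := funext fun k => by
    rw [Pi.coe_exp, ← Real.exp_eq_exp_ℝ]
  rw [this]

lemma sym_exp_formula {N : ℕ} (A : Matrix (Fin N) (Fin N) ℝ) (hH : A.IsHermitian) (t : ℝ) :
    exp (t • (-A)) =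
      (hH.eigenvectorUnitary : Matrix (Fin N) (Fin N) ℝ) *
        diagonal (fun k => Real.exp (-(t * hH.eigenvalues k))) *
        star (hH.eigenvectorUnitary : Matrix (Fin N) (Fin N) ℝ) := by
  set U : Matrix (Fin N) (Fin N) ℝ := (hH.eigenvectorUnitary : Matrix (Fin N) (Fin N) ℝ) with hU
  have hspec : A = U * diagonal hH.eigenvalues * star U := by simpa using hH.spectral_theorem
  have hsU : star U * U = 1 := by simp [hU]
  have hUs : U * star U = 1 := by simp [hU]
  set Uu : (Matrix (Fin N) (Fin N) ℝ)ˣ := ⟨U, star U, hUs, hsU⟩ with hUu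
  have h1 : t • (-A) = (Uu : Matrix (Fin N) (Fin N) ℝ) *
      diagonal (fun k => -(t * hH.eigenvalues k)) * (↑Uu⁻¹ : Matrix (Fin N) (Fin N) ℝ) := by
    show t • (-A) = U * diagonal (fun k => -(t * hH.eigenvalues k)) * star U
    rw [show t • (-A) = t • (-(U * diagonal hH.eigenvalues * star U)) from by rw [← hspec]]
    ext i j
    rw [UDU_apply, Matrix.smul_apply, Matrix.neg_apply, UDU_apply, ← Finset.sum_neg_distrib,
      Finset.smul_sum]
    congr 1; ext k; rw [smul_eq_mul]; ring
  rw [h1, Matrix.exp_units_conj Uu]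
  show U * _ * star U = _
  rw [exp_diag_real]

lemma sym_exp_limit {N : ℕ} (A : Matrix (Fin N) (Fin N) ℝ) (hA : A.PosSemidef)
    (v : Fin N → ℝ) (hv : v ≠ 0)
    (hker : ∀ x, A.mulVec x = 0 ↔ ∃ c : ℝ, x = c • v)
    (hexpf : ∀ t : ℝ, exp (t • (-A)) =
      (hA.isHermitian.eigenvectorUnitary : Matrix (Fin N) (Fin N) ℝ) *
        diagonal (fun k => Real.exp (-(t * hA.isHermitian.eigenvalues k))) *
        star (hA.isHermitian.eigenvectorUnitary : Matrix (Fin N) (Fin N) ℝ)) :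
    Tendsto (fun t : ℝ => exp (t • (-A))) atTop
      (nhds (Matrix.of fun i j => v i * v j / (∑ k, v k * v k))) := by
  classical
  have hH := hA.isHermitian
  set U : Matrix (Fin N) (Fin N) ℝ := (hH.eigenvectorUnitary : Matrix (Fin N) (Fin N) ℝ) with hU
  set lam : Fin N → ℝ := hH.eigenvalues with hlam
  have hspec : A = U * diagonal lam * star U := by simpa using hH.spectral_theorem
  have hsU : star U * U = 1 := by simp [hU]
  have hUs : U * star U = 1 := by simp [hU]
  set χ : Fin N → ℝ := fun k => if lam k = 0 then 1 else 0 with hχ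
  set P : Matrix (Fin N) (Fin N) ℝ := U * diagonal χ * star U with hP
  -- step 1: convergence to P
  have hconv : Tendsto (fun t : ℝ => exp (t • (-A))) atTop (nhds P) := by
    refine tendsto_pi_nhds.mpr ?_
    intro i
    rw [tendsto_pi_nhds]
    intro j
    have hre : ∀ t : ℝ, (exp (t • (-A))) i j
        = ∑ k, U i k * Real.exp (-(t * lam k)) * U j k := by
      intro t; rw [hexpf t]; exact UDU_apply ..
    simp only [hre]
    have hPij : P i j = ∑ k, U i k * χ k * U j k := UDU_apply ..
    rw [hPij]
    apply tendsto_finset_sum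
    intro k _
    by_cases h0 : lam k = 0
    · have : ∀ t : ℝ, U i k * Real.exp (-(t * lam k)) * U j k = U i k * χ k * U j k := by
        intro t; simp [h0, hχ]
    
      simp only [this]
      exact tendsto_const_nhds
    · have hpos : 0 < lam k := lt_of_le_of_ne (hA.eigenvalues_nonneg k) (Ne.symm h0)
      have h1 : Tendsto (fun t : ℝ => -(t * lam k)) atTop atBot := by
        exact tendsto_neg_atBot_iff.mpr (tendsto_id.atTop_mul_const hpos)
      have h2 : Tendsto (fun t : ℝ => Real.exp (-(t * lam k))) atTop (nhds 0) :=
        Real.tendsto_exp_atBot.comp h1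
      have h3 := (h2.const_mul (U i k)).mul_const (U j k)
      simp only [mul_zero, zero_mul] at h3
      convert h3 using 2
      simp [hχ, h0]
  -- step 2: identify P
  suffices hPeq : (Matrix.of fun i j => v i * v j / (∑ k, v k * v k)) = P by
    rw [hPeq]; exact hconv
  obtain ⟨i0, hi0⟩ : ∃ i, v i ≠ 0 := Function.ne_iff.mp hv
  have vvpos : 0 < ∑ k, v k * v k :=
    Finset.sum_pos' (fun k _ => mul_self_nonneg _)
      ⟨i0, Finset.mem_univ i0, mul_self_pos.mpr hi0⟩
  have hAv : A *ᵥ v = 0 := (hker v).mpr ⟨1, (one_smul ℝ v).symm⟩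
  have hDχ : diagonal lam * diagonal χ = 0 := by
    rw [diagonal_mul_diagonal]
    ext k l
    by_cases h0 : lam k = 0 <;> simp [diagonal, hχ, h0]
  have hAP : A * P = 0 := by
    calc A * P = (U * diagonal lam * star U) * (U * diagonal χ * star U) := by rw [← hspec, hP]
    _ = U * (diagonal lam * ((star U * U) * (diagonal χ * star U))) := by
        simp only [Matrix.mul_assoc]
    _ = U * diagonal lam * diagonal χ * star U := by
        rw [hsU, Matrix.one_mul]; simp only [Matrix.mul_assoc]
    _ = 0 := by
        rw [Matrix.mul_assoc U, hDχ, Matrix.mul_zero, Matrix.zero_mul]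
  have hw : diagonal lam *ᵥ (star U *ᵥ v) = 0 := by
    rw [mulVec_mulVec]
    have h4 : diagonal lam * star U = star U * A := by
      rw [hspec]
      calc diagonal lam * star U = (star U * U) * (diagonal lam * star U) := by
            rw [hsU, Matrix.one_mul]
      _ = star U * (U * diagonal lam * star U) := by simp only [Matrix.mul_assoc]
    rw [h4, ← mulVec_mulVec, hAv, mulVec_zero]
  have hχw : diagonal χ *ᵥ (star U *ᵥ v) = star U *ᵥ v := by
    funext k
    rw [mulVec_diagonal]
    by_cases h0 : lam k = 0
    · simp [hχ, h0]
    · have := congrFun hw k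
      rw [mulVec_diagonal, Pi.zero_apply] at this
      have hz : (star U *ᵥ v) k = 0 := by
        rcases mul_eq_zero.mp this with h | h
        · exact absurd h h0
        · exact h
      simp [hχ, h0, hz]
  have hPv : P *ᵥ v = v := by
    rw [hP, ← mulVec_mulVec, ← mulVec_mulVec, hχw, mulVec_mulVec, hUs, one_mulVec]
  have hPsym : ∀ i j, P i j = P j i := by
    intro i j
    rw [hP, UDU_apply, UDU_apply]
    exact Finset.sum_congr rfl fun k _ => by ring
  funext i j
  have hAcol : A *ᵥ (P *ᵥ Pi.single j 1) = 0 := by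
    rw [mulVec_mulVec, hAP, zero_mulVec]
  obtain ⟨c, hc⟩ := (hker _).mp hAcol
  have hway1 : v ⬝ᵥ (P *ᵥ Pi.single j 1) = v j := by
    have h5 : v ⬝ᵥ (P *ᵥ Pi.single j 1) = (P *ᵥ v) j := by
      rw [mulVec_single]
      simp only [dotProduct, mul_one, mulVec]
      exact Finset.sum_congr rfl fun k _ => by rw [hPsym j k]; simp [mul_comm]
    rw [h5, hPv]
  have hway2 : v ⬝ᵥ (P *ᵥ Pi.single j 1) = c * (∑ k, v k * v k) := by
    rw [hc]
    simp [dotProduct, Finset.mul_sum, mul_comm, mul_left_comm]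
  have hc' : c = v j / (∑ k, v k * v k) := by
    rw [eq_div_iff vvpos.ne', ← hway2, hway1]
  have hPij : P i j = c * v i := by
    have := congrFun hc i
    simpa [mul_one] using this
  rw [Matrix.of_apply, hPij, hc']
  field_simp

lemma diag_exp_limit {N : ℕ} (hN : 0 < N) (m : Fin N → ℝ) (hm : ∀ i, 0 < m i)
    (L : Matrix (Fin N) (Fin N) ℝ) (hL : L.PosSemidef)
    (hker : ∀ x, L.mulVec x = 0 ↔ ∃ c : ℝ, x = c • (fun _ => (1:ℝ))) :
    Tendsto (fun t : ℝ => exp (t • (-((diagonal m)⁻¹ * L))) * (diagonal m)⁻¹) atTop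
      (nhds ((∑ k, m k)⁻¹ • Matrix.of (fun _ _ => (1:ℝ)))) := by
  classical
  set s : Fin N → ℝ := fun i => Real.sqrt (m i) with hsdef
  have hs : ∀ i, 0 < s i := fun i => Real.sqrt_pos.mpr (hm i)
  have hss : ∀ i, s i * s i = m i := fun i => Real.mul_self_sqrt (hm i).le
  set S : Matrix (Fin N) (Fin N) ℝ := diagonal s with hSdef
  set Sinv : Matrix (Fin N) (Fin N) ℝ := diagonal (fun i => (s i)⁻¹) with hSinvdef
  have hSS : S * Sinv = 1 := by
    rw [hSdef, hSinvdef, diagonal_mul_diagonal,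
      show (fun i => s i * (s i)⁻¹) = fun _ => (1:ℝ) from
        funext fun i => mul_inv_cancel₀ (hs i).ne', diagonal_one]
  have hSinvS : Sinv * S = 1 := by
    rw [hSdef, hSinvdef, diagonal_mul_diagonal,
      show (fun i => (s i)⁻¹ * s i) = fun _ => (1:ℝ) from
        funext fun i => inv_mul_cancel₀ (hs i).ne', diagonal_one]
  have hMinv : (diagonal m)⁻¹ = diagonal (fun i => (m i)⁻¹) := by
    refine Matrix.inv_eq_left_inv ?_
    rw [diagonal_mul_diagonal,
      show (fun i => (m i)⁻¹ * m i) = fun _ => (1:ℝ) from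
        funext fun i => inv_mul_cancel₀ (hm i).ne', diagonal_one]
  have hSinvSinv : Sinv * Sinv = (diagonal m)⁻¹ := by
    have h : (fun i => (s i)⁻¹ * (s i)⁻¹) = fun i => (m i)⁻¹ :=
      funext fun i => by rw [← hss i, mul_inv]
    rw [hMinv, hSinvdef, diagonal_mul_diagonal, h]
  have hSMinv : S * (diagonal m)⁻¹ = Sinv := by
    have h : (fun i => s i * (m i)⁻¹) = fun i => (s i)⁻¹ :=
      funext fun i => by
        rw [← hss i, mul_inv, ← mul_assoc, mul_inv_cancel₀ (hs i).ne', one_mul]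
    rw [hMinv, hSdef, hSinvdef, diagonal_mul_diagonal, h]
  set A : Matrix (Fin N) (Fin N) ℝ := Sinv * L * Sinv with hAdef
  have hApsd : A.PosSemidef := by
    have h := hL.mul_mul_conjTranspose_same Sinv
    have h2 : Sinvᴴ = Sinv := by
      rw [hSinvdef, diagonal_conjTranspose, star_trivial]
    rwa [h2] at h
  -- kernel of A
  have hSinvVec : ∀ y : Fin N → ℝ, Sinv *ᵥ y = 0 ↔ y = 0 := by
    intro y
    constructor
    · intro h
      funext i
      have := congrFun h i
      rw [hSinvdef, mulVec_diagonal, Pi.zero_apply] at this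
      have := (mul_eq_zero.mp this).resolve_left (inv_ne_zero (hs i).ne')
      simpa using this
    · intro h; rw [h, mulVec_zero]
  have hkerA : ∀ x, A.mulVec x = 0 ↔ ∃ c : ℝ, x = c • s := by
    intro x
    have hmv : A *ᵥ x = Sinv *ᵥ (L *ᵥ (Sinv *ᵥ x)) := by
      rw [mulVec_mulVec, mulVec_mulVec]
    constructor
    · intro h
      rw [hmv, hSinvVec] at h
      obtain ⟨c, hc⟩ := (hker _).mp h
      refine ⟨c, ?_⟩
      have hx : x = (S * Sinv) *ᵥ x := by rw [hSS, one_mulVec]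
      rw [hx, ← mulVec_mulVec, hc, mulVec_smul]
      congr 1
      funext i
      rw [hSdef, mulVec_diagonal, mul_one]
    · rintro ⟨c, rfl⟩
      have hL1 : L *ᵥ (fun _ => (1:ℝ)) = 0 := (hker _).mpr ⟨1, by funext i; simp⟩
      have hSinvs : Sinv *ᵥ (c • s) = c • (fun _ => (1:ℝ)) := by
        funext i
        rw [hSinvdef, mulVec_smul]
        simp [mulVec_diagonal, inv_mul_cancel₀ (hs i).ne']
      rw [hmv, hSinvs, mulVec_smul, hL1, smul_zero, mulVec_zero]
  have hsne : s ≠ 0 := by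
    intro h
    have i0 : Fin N := ⟨0, hN⟩
    exact (hs i0).ne' (congrFun h i0)
  have hlim := sym_exp_limit A hApsd s hsne hkerA (sym_exp_formula A hApsd.isHermitian)
  -- conjugation identity
  set Su : (Matrix (Fin N) (Fin N) ℝ)ˣ := ⟨S, Sinv, hSS, hSinvS⟩ with hSu
  have hconj : ∀ t : ℝ, exp (t • (-((diagonal m)⁻¹ * L))) * (diagonal m)⁻¹
      = Sinv * exp (t • (-A)) * Sinv := by
    intro t
    have h6 : Sinv * A * S = (diagonal m)⁻¹ * L :=
      calc Sinv * A * S = Sinv * (Sinv * (L * (Sinv * S))) := by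
            rw [hAdef]; simp only [Matrix.mul_assoc]
      _ = Sinv * (Sinv * L) := by rw [hSinvS, Matrix.mul_one]
      _ = (diagonal m)⁻¹ * L := by rw [← Matrix.mul_assoc, hSinvSinv]
    have h7 : t • (-((diagonal m)⁻¹ * L)) =
        (↑Su⁻¹ : Matrix (Fin N) (Fin N) ℝ) * (t • (-A)) * (↑Su : Matrix (Fin N) (Fin N) ℝ) := by
      show t • (-((diagonal m)⁻¹ * L)) = Sinv * (t • (-A)) * S
      rw [← h6, Matrix.mul_smul, Matrix.smul_mul, mul_neg, neg_mul]
    rw [h7, Matrix.exp_units_conj' Su]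
    show Sinv * exp (t • (-A)) * S * (diagonal m)⁻¹ = _
    rw [Matrix.mul_assoc _ S, hSMinv]
  -- conclude
  have hcont : Continuous fun X : Matrix (Fin N) (Fin N) ℝ => Sinv * X * Sinv :=
    (continuous_const.matrix_mul continuous_id).matrix_mul continuous_const
  have hlim2 := (hcont.tendsto _).comp hlim
  have hfinal : Sinv * (Matrix.of fun i j => s i * s j / (∑ k, s k * s k)) * Sinv
      = (∑ k, m k)⁻¹ • Matrix.of (fun _ _ => (1:ℝ)) := by
    have hsum : ∑ k, s k * s k = ∑ k, m k := Finset.sum_congr rfl fun k _ => hss k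
    have hsumpos : (0:ℝ) < ∑ k, m k :=
      Finset.sum_pos (fun k _ => hm k) ⟨⟨0, hN⟩, Finset.mem_univ _⟩
    ext i j
    rw [Matrix.smul_apply, hSinvdef, mul_diagonal, diagonal_mul, Matrix.of_apply,
      Matrix.of_apply, hsum]
    have hi := (hs i).ne'
    have hj := (hs j).ne'
    have hS := hsumpos.ne'
    field_simp
    rw [smul_eq_mul, mul_one, one_div]
    exact (mul_inv_cancel₀ hS).symm
  rw [← hfinal]
  exact Tendsto.congr (fun t => (hconj t).symm) hlim2

lemma sandwich_tendsto {n p q : ℕ} (G : Matrix (Fin q) (Fin n) ℝ)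
    (F : Matrix (Fin n) (Fin p) ℝ) {f : ℝ → Matrix (Fin n) (Fin n) ℝ}
    {X : Matrix (Fin n) (Fin n) ℝ} (h : Tendsto f atTop (nhds X)) :
    Tendsto (fun t => G * f t * F) atTop (nhds (G * X * F)) := by
  have hcont : Continuous fun Y : Matrix (Fin n) (Fin n) ℝ => G * Y * F :=
    (continuous_const.matrix_mul continuous_id).matrix_mul continuous_const
  exact (hcont.tendsto _).comp h

/-- For the single-integrator network `Mẋ = −Lx + Fu`, `y = Hx` and its clustered
reduction via a partition characteristic matrix `Π`, the impulse responses
`y(t) = H e^{−M⁻¹Lt} M⁻¹ F` and `ŷ(t) = Ĥ e^{−M̂⁻¹L̂t} M̂⁻¹ F̂` both converge as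
`t → ∞` to `H 𝟙_n 𝟙_nᵀ F / (𝟙_nᵀ M 𝟙_n)`. -/
theorem clustered_impulse_response_limit {n r p q : ℕ}
    (m : Fin n → ℝ) (hm : ∀ i, 0 < m i)
    (L : Matrix (Fin n) (Fin n) ℝ)
    (hLpsd : L.PosSemidef)
    (hLker : LinearMap.ker L.mulVecLin = Submodule.span ℝ {fun _ => (1 : ℝ)})
    (F : Matrix (Fin n) (Fin p) ℝ) (H : Matrix (Fin q) (Fin n) ℝ)
    (C : Fin r → Finset (Fin n))
    (hne : ∀ j, (C j).Nonempty)
    (hdisj : ∀ j k, j ≠ k → Disjoint (C j) (C k))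
    (hcover : ∀ i : Fin n, ∃ j, i ∈ C j)
    (Pi : Matrix (Fin n) (Fin r) ℝ)
    (hPi : ∀ i j, Pi i j = if i ∈ C j then 1 else 0)
    (M : Matrix (Fin n) (Fin n) ℝ) (hM : M = Matrix.diagonal m) :
    Tendsto (fun t : ℝ => H * exp (t • (-(M⁻¹ * L))) * M⁻¹ * F) atTop
      (nhds ((dotProduct (fun _ => (1 : ℝ)) (M.mulVec fun _ => (1 : ℝ)))⁻¹ •
        (H * (Matrix.of fun _ _ => (1 : ℝ) : Matrix (Fin n) (Fin n) ℝ) * F))) ∧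
    Tendsto (fun t : ℝ =>
        (H * Pi) * exp (t • (-((Piᵀ * M * Pi)⁻¹ * (Piᵀ * L * Pi)))) *
          (Piᵀ * M * Pi)⁻¹ * (Piᵀ * F)) atTop
      (nhds ((dotProduct (fun _ => (1 : ℝ)) (M.mulVec fun _ => (1 : ℝ)))⁻¹ •
        (H * (Matrix.of fun _ _ => (1 : ℝ) : Matrix (Fin n) (Fin n) ℝ) * F))) := by
  classical
  subst hM
  rcases Nat.eq_zero_or_pos n with hn | hn
  · -- degenerate case: n = 0
    subst hn
    have hHzero : ∀ (X : Matrix (Fin q) (Fin 0) ℝ) (Y : Matrix (Fin 0) (Fin p) ℝ),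
        X * Y = 0 := by
      intro X Y; ext i j; simp [mul_apply]
    have htarget : (dotProduct (fun _ => (1 : ℝ))
        ((diagonal m).mulVec fun _ => (1 : ℝ)))⁻¹ •
        (H * (Matrix.of fun _ _ => (1 : ℝ) : Matrix (Fin 0) (Fin 0) ℝ) * F) = (0 : Matrix (Fin q) (Fin p) ℝ) := by
      rw [Matrix.mul_assoc H, hHzero]
      exact smul_zero _
    rw [htarget]
    constructor
    · have : ∀ t : ℝ, H * exp (t • (-((diagonal m)⁻¹ * L))) * (diagonal m)⁻¹ * F = 0 := by
        intro t
        rw [Matrix.mul_assoc, Matrix.mul_assoc, hHzero]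
      simp only [this]
      exact tendsto_const_nhds
    · have : ∀ t : ℝ, (H * Pi) * exp (t • (-((Piᵀ * diagonal m * Pi)⁻¹ *
          (Piᵀ * L * Pi)))) * (Piᵀ * diagonal m * Pi)⁻¹ * (Piᵀ * F) = 0 := by
        intro t
        have hHPi : H * Pi = 0 := by ext i j; simp [mul_apply]
        rw [hHPi, Matrix.zero_mul, Matrix.zero_mul, Matrix.zero_mul]
      simp only [this]
      exact tendsto_const_nhds
  -- main case : n > 0
  have hdot : dotProduct (fun _ => (1 : ℝ)) ((diagonal m).mulVec fun _ => (1 : ℝ))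
      = ∑ i, m i := by
    simp [dotProduct, mulVec_diagonal]
  have hker' : ∀ x, L.mulVec x = 0 ↔ ∃ c : ℝ, x = c • (fun _ => (1:ℝ)) := by
    intro x
    have h1 : L.mulVec x = L.mulVecLin x := rfl
    rw [h1, ← LinearMap.mem_ker, hLker, Submodule.mem_span_singleton]
    constructor
    · rintro ⟨a, ha⟩; exact ⟨a, ha.symm⟩
    · rintro ⟨a, ha⟩; exact ⟨a, ha.symm⟩
  constructor
  · have key := diag_exp_limit hn m hm L hLpsd hker'
    have h2 := sandwich_tendsto H F key
    rw [hdot]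
    have h3 : (fun t : ℝ => H * (exp (t • (-((diagonal m)⁻¹ * L))) * (diagonal m)⁻¹) * F)
        = fun t : ℝ => H * exp (t • (-((diagonal m)⁻¹ * L))) * (diagonal m)⁻¹ * F := by
      funext t; rw [← Matrix.mul_assoc]
    rw [h3] at h2
    have h4 : H * ((∑ k, m k)⁻¹ • (Matrix.of (fun _ _ => (1:ℝ)) : Matrix (Fin n) (Fin n) ℝ)) * F
        = (∑ k, m k)⁻¹ • (H * (Matrix.of (fun _ _ => (1:ℝ)) : Matrix (Fin n) (Fin n) ℝ) * F) := by
      rw [Matrix.mul_smul, Matrix.smul_mul]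
    rwa [h4] at h2
  · -- reduced system
    set cl : Fin n → Fin r := fun i => (hcover i).choose with hcl
    have hclmem : ∀ i, i ∈ C (cl i) := fun i => (hcover i).choose_spec
    have hmem_iff : ∀ (i : Fin n) (j : Fin r), i ∈ C j ↔ cl i = j := by
      intro i j
      constructor
      · intro hij
        by_contra hne'
        exact Finset.disjoint_left.mp (hdisj (cl i) j hne') (hclmem i) hij
      · rintro rfl; exact hclmem i
    have hr : 0 < r := (cl ⟨0, hn⟩).pos
    set mh : Fin r → ℝ := fun j => ∑ i ∈ C j, m i with hmh
    have hmhpos : ∀ j, 0 < mh j := fun j => Finset.sum_pos (fun i _ => hm i) (hne j)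
    have hMhat : Piᵀ * diagonal m * Pi = diagonal mh := by
      ext j k
      rw [mul_apply]
      simp only [mul_diagonal, transpose_apply]
      by_cases hjk : j = k
      · subst hjk
        rw [diagonal_apply_eq]
        rw [Finset.sum_congr rfl (fun i _ =>
          show Pi i j * m i * Pi i j = if i ∈ C j then m i else 0 from by
            rw [hPi]; by_cases h : i ∈ C j <;> simp [h])]
        rw [Finset.sum_ite_mem, Finset.univ_inter]
      · rw [diagonal_apply_ne _ hjk]
        apply Finset.sum_eq_zero
        intro i _
        rw [hPi, hPi]
        by_cases h1 : i ∈ C j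
        · have h2 : i ∉ C k := fun h2 =>
            hjk (((hmem_iff i j).mp h1).symm.trans ((hmem_iff i k).mp h2))
          simp [h1, h2]
        · simp [h1]
    have hLhpsd : (Piᵀ * L * Pi).PosSemidef := by
      have h := hLpsd.conjTranspose_mul_mul_same Pi
      rwa [conjTranspose_eq_transpose_of_trivial] at h
    have hPimv : ∀ (y : Fin r → ℝ) (i : Fin n), (Pi *ᵥ y) i = y (cl i) := by
      intro y i
      simp only [mulVec, dotProduct]
      rw [Finset.sum_congr rfl (fun j _ =>
        show Pi i j * y j = if j = cl i then y j else 0 from by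
          rw [hPi]
          by_cases h : i ∈ C j
          · rw [if_pos h, one_mul, if_pos ((hmem_iff i j).mp h).symm]
          · rw [if_neg h, zero_mul, if_neg (fun hh => h ((hmem_iff i j).mpr hh.symm))])]
      rw [Finset.sum_ite_eq' Finset.univ (cl i) y, if_pos (Finset.mem_univ _)]
    have hPi1 : Pi *ᵥ (fun _ => (1:ℝ)) = fun _ => (1:ℝ) := funext fun i => by rw [hPimv]
    have hL1 : L *ᵥ (fun _ => (1:ℝ)) = 0 := (hker' _).mpr ⟨1, by funext i; simp⟩
    have hkerh : ∀ x, (Piᵀ * L * Pi).mulVec x = 0 ↔ ∃ c : ℝ, x = c • (fun _ => (1:ℝ)) := by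
      intro x
      have hmv : (Piᵀ * L * Pi) *ᵥ x = Piᵀ *ᵥ (L *ᵥ (Pi *ᵥ x)) := by
        rw [mulVec_mulVec, mulVec_mulVec]
      constructor
      · intro h
        have e1 : (Pi *ᵥ x) ⬝ᵥ (L *ᵥ (Pi *ᵥ x)) = x ⬝ᵥ ((Piᵀ * L * Pi) *ᵥ x) := by
          rw [hmv, dotProduct_mulVec x, vecMul_transpose]
        have key2 : star (Pi *ᵥ x) ⬝ᵥ (L *ᵥ (Pi *ᵥ x)) = 0 := by
          rw [star_trivial, e1, h, dotProduct_zero]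
        have hLPix : L *ᵥ (Pi *ᵥ x) = 0 := (hLpsd.dotProduct_mulVec_zero_iff _).mp key2
        obtain ⟨c, hc⟩ := (hker' _).mp hLPix
        refine ⟨c, funext fun j => ?_⟩
        obtain ⟨i, hi⟩ := hne j
        have h5 := congrFun hc i
        rw [hPimv, (hmem_iff i j).mp hi] at h5
        simpa using h5
      · rintro ⟨c, rfl⟩
        rw [← mulVec_mulVec, ← mulVec_mulVec, mulVec_smul, hPi1, mulVec_smul, hL1,
          smul_zero, mulVec_zero]
    have key := diag_exp_limit hr mh hmhpos (Piᵀ * L * Pi) hLhpsd hkerh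
    rw [← hMhat] at key
    have h2 := sandwich_tendsto (H * Pi) (Piᵀ * F) key
    have h3 : (fun t : ℝ => (H * Pi) *
          (exp (t • (-((Piᵀ * diagonal m * Pi)⁻¹ * (Piᵀ * L * Pi)))) *
            (Piᵀ * diagonal m * Pi)⁻¹) * (Piᵀ * F))
        = fun t : ℝ => (H * Pi) * exp (t • (-((Piᵀ * diagonal m * Pi)⁻¹ *
            (Piᵀ * L * Pi)))) * (Piᵀ * diagonal m * Pi)⁻¹ * (Piᵀ * F) :=
      funext fun t => by rw [← Matrix.mul_assoc (H * Pi)]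
    rw [h3] at h2
    have hCfil : ∀ j, C j = Finset.univ.filter (fun i => cl i = j) := fun j => by
      ext i
      simp [Finset.mem_filter, hmem_iff]
    have hsum : ∑ j, mh j = ∑ i, m i := by
      calc ∑ j, mh j = ∑ j, ∑ i ∈ Finset.univ.filter (fun i => cl i = j), m i :=
            Finset.sum_congr rfl fun j _ => by rw [hmh, ← hCfil j]
      _ = ∑ i, m i := Finset.sum_fiberwise_of_maps_to (fun i _ => Finset.mem_univ (cl i)) m
    have hrow : ∀ i, ∑ j, Pi i j = 1 := fun i => by
      have := hPimv (fun _ => (1:ℝ)) i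
      simpa [mulVec, dotProduct, mul_one] using this
    have hPiJ : Pi * (Matrix.of fun _ _ : Fin r => (1:ℝ)) * Piᵀ
        = (Matrix.of fun _ _ : Fin n => (1:ℝ)) := by
      ext i k
      simp only [mul_apply, Matrix.of_apply, transpose_apply, mul_one]
      rw [Finset.sum_congr rfl fun j' _ => by rw [hrow i, one_mul]]
      exact hrow k
    have hlimval : (H * Pi) * ((∑ j, mh j)⁻¹ • Matrix.of (fun _ _ : Fin r => (1:ℝ))) *
          (Piᵀ * F)
        = (dotProduct (fun _ => (1 : ℝ)) ((diagonal m).mulVec fun _ => (1 : ℝ)))⁻¹ •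
          (H * (Matrix.of fun _ _ : Fin n => (1 : ℝ)) * F) := by
      rw [Matrix.mul_smul, Matrix.smul_mul, hdot, hsum]
      congr 1
      calc (H * Pi) * (Matrix.of fun _ _ : Fin r => (1:ℝ)) * (Piᵀ * F)
          = H * (Pi * (Matrix.of fun _ _ : Fin r => (1:ℝ)) * Piᵀ) * F := by
            simp only [Matrix.mul_assoc]
      _ = H * (Matrix.of fun _ _ : Fin n => (1:ℝ)) * F := by rw [hPiJ]
    rwa [hlimval] at h2
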